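/- Let G be a graph with spectral radius ρ(G) and t triangles. Then e(G) ≥ ρ(G)² − 3t/ρ(G). -/

import Mathlib

open Classical in
/-- Adjacency matrix of a simple graph over ℝ. -/
noncomputable def adjMat {V : Type*} [Fintype V] (G : SimpleGraph V) : Matrix V V ℝ :=
  Matrix.of fun i j => if G.Adj i j then (1 : ℝ) else 0

/-- Spectral radius: largest adjacency eigenvalue. -/
noncomputable def specRad {V : Type*} [Fintype V] (G : SimpleGraph V) : ℝ :=
  sSup {t : ℝ | ∃ x : V → ℝ, x ≠ 0 ∧ (adjMat G).mulVec x = t • x}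

/-- `G` contains two edge-disjoint cycles. -/
def HasTwoEdgeDisjointCycles {V : Type*} (G : SimpleGraph V) : Prop :=
  ∃ (u v : V) (c₁ : G.Walk u u) (c₂ : G.Walk v v),
    c₁.IsCycle ∧ c₂.IsCycle ∧ ∀ e ∈ c₁.edges, e ∉ c₂.edges

/-- `G` contains two distinct cycles (as subgraphs) of the same length. -/
def HasTwoCyclesSameLength {V : Type*} [DecidableEq V] (G : SimpleGraph V) : Prop :=
  ∃ (u v : V) (c₁ : G.Walk u u) (c₂ : G.Walk v v),
    c₁.IsCycle ∧ c₂.IsCycle ∧ c₁.length = c₂.length ∧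
      c₁.edges.toFinset ≠ c₂.edges.toFinset

/-- The edge set of a triangle given by a triple of vertices. -/
def triEdges {V : Type*} (t : V × V × V) : Set (Sym2 V) :=
  {s(t.1, t.2.1), s(t.2.1, t.2.2), s(t.1, t.2.2)}

/-- `G` contains `k` pairwise edge-disjoint triangles. -/
def HasEdgeDisjointTriangles {V : Type*} (G : SimpleGraph V) (k : ℕ) : Prop :=
  ∃ T : Fin k → V × V × V,
    (∀ i, G.Adj (T i).1 (T i).2.1 ∧ G.Adj (T i).2.1 (T i).2.2 ∧ G.Adj (T i).1 (T i).2.2) ∧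
    ∀ i j, i ≠ j → Disjoint (triEdges (T i)) (triEdges (T j))

/-- The star `K_{1,n-1}` (center `0`) plus an edge between the leaves `1` and `2`. -/
def starPlus (n : ℕ) : SimpleGraph (Fin n) :=
  SimpleGraph.fromRel (fun x y => x.val = 0 ∨ (x.val < 3 ∧ y.val < 3))

/-- `K₄ • K_{1,n-4}`: `K₄` on `{0,1,2,3}` with `0` joined to everything. -/
def K4Star (n : ℕ) : SimpleGraph (Fin n) :=
  SimpleGraph.fromRel (fun x y => x.val = 0 ∨ (x.val < 4 ∧ y.val < 4))

/-- `K_{3,3} • K_{1,n-6}`: `K_{3,3}` with parts `{0,1,2}`, `{3,4,5}`, and the vertex `0`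
identified with the center of a star with leaves `6,…,n-1`. -/
def K33Star (n : ℕ) : SimpleGraph (Fin n) :=
  SimpleGraph.fromRel (fun x y =>
    (x.val < 3 ∧ 3 ≤ y.val ∧ y.val < 6) ∨ (x.val = 0 ∧ 6 ≤ y.val))

/-- `K_{⌈n/2⌉,⌊n/2⌋}` with a star `K_{1,k-1}` (center `0`, leaves `1,…,k-1`) embedded
in the part `{0,…,⌊n/2⌋-1}` of size `⌊n/2⌋`. -/
def bipStar (n k : ℕ) : SimpleGraph (Fin n) :=
  SimpleGraph.fromRel (fun x y =>
    (x.val < n / 2 ∧ n / 2 ≤ y.val) ∨ (x.val = 0 ∧ 0 < y.val ∧ y.val < k))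

/-- `K_{⌈n/2⌉,⌊n/2⌋}` with a triangle `C₃` on `{0,1,2}` embedded in the part of size `⌊n/2⌋`. -/
def bipTri (n : ℕ) : SimpleGraph (Fin n) :=
  SimpleGraph.fromRel (fun x y =>
    (x.val < n / 2 ∧ n / 2 ≤ y.val) ∨ (x.val < 3 ∧ y.val < 3))

/-- `v` is a cut vertex of `G`. -/
def IsCutVertex {V : Type*} (G : SimpleGraph V) (v : V) : Prop :=
  ∃ a b : ({v}ᶜ : Set V), G.Reachable ↑a ↑b ∧ ¬ (G.induce ({v}ᶜ : Set V)).Reachable a b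


namespace Stmt2Aux
open Matrix Finset

set_option linter.unusedSectionVars false in
section
variable {V : Type*} [Fintype V] [DecidableEq V]

lemma adjMat_apply (G : SimpleGraph V) [DecidableRel G.Adj] (i j : V) :
    adjMat G i j = if G.Adj i j then (1:ℝ) else 0 := by
  simp [adjMat]

lemma isHerm (G : SimpleGraph V) [DecidableRel G.Adj] : (adjMat G).IsHermitian := by
  show (adjMat G)ᴴ = adjMat G
  ext i j
  simp only [Matrix.conjTranspose_apply, adjMat, Matrix.of_apply, star_trivial]
  rw [G.adj_comm]

lemma adjMat_mul_self (G : SimpleGraph V) [DecidableRel G.Adj] (i j : V) :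
    adjMat G i j * adjMat G j i = if G.Adj i j then (1:ℝ) else 0 := by
  by_cases h : G.Adj i j
  · have h' : G.Adj j i := h.symm
    simp [adjMat_apply, h, h']
  · simp [adjMat_apply, h]

lemma filter_adj_card (G : SimpleGraph V) [DecidableRel G.Adj] (j : V) :
    (Finset.univ.filter fun i => G.Adj j i).card = G.degree j := by
  rw [← SimpleGraph.card_neighborFinset_eq_degree]
  congr 1
  ext x
  simp

lemma trace_one (G : SimpleGraph V) [DecidableRel G.Adj] :
    Matrix.trace (adjMat G) = 0 := by
  unfold Matrix.trace
  simp [Matrix.diag, adjMat_apply]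

lemma trace_two (G : SimpleGraph V) [DecidableRel G.Adj] :
    Matrix.trace (adjMat G ^ 2) = 2 * (G.edgeFinset.card : ℝ) := by
  rw [pow_two]
  unfold Matrix.trace
  simp only [Matrix.diag, Matrix.mul_apply]
  calc ∑ x : V, ∑ j : V, adjMat G x j * adjMat G j x
      = ∑ x : V, (G.degree x : ℝ) := by
        refine Finset.sum_congr rfl fun x _ => ?_
        simp only [adjMat_mul_self]
        rw [Finset.sum_boole, filter_adj_card]
    _ = 2 * (G.edgeFinset.card : ℝ) := by
        rw [← Nat.cast_sum]
        norm_cast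
        exact G.sum_degrees_eq_twice_card_edges

lemma tri_count (G : SimpleGraph V) [DecidableRel G.Adj] :
    (Finset.univ.filter (fun p : V × V × V =>
        G.Adj p.1 p.2.1 ∧ G.Adj p.2.1 p.2.2 ∧ G.Adj p.2.2 p.1)).card
      ≤ 6 * (G.cliqueFinset 3).card := by
  apply Finset.card_le_mul_card_image_of_maps_to
    (f := fun p : V × V × V => ({p.1, p.2.1, p.2.2} : Finset V))
  · intro p hp
    simp only [Finset.mem_filter, Finset.mem_univ, true_and] at hp
    rw [SimpleGraph.mem_cliqueFinset_iff]
    exact SimpleGraph.is3Clique_triple_iff.2 ⟨hp.1, hp.2.2.symm, hp.2.1⟩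
  · intro s hs
    have hs3 : s.card = 3 := (SimpleGraph.mem_cliqueFinset_iff.mp hs).card_eq
    have key : ∀ p ∈ (Finset.univ.filter (fun p : V × V × V =>
        G.Adj p.1 p.2.1 ∧ G.Adj p.2.1 p.2.2 ∧ G.Adj p.2.2 p.1)).filter
          (fun x => ({x.1, x.2.1, x.2.2} : Finset V) = s),
        (p.1, p.2.1) ∈ s.offDiag := by
      intro p hp
      simp only [Finset.mem_filter, Finset.mem_univ, true_and] at hp
      obtain ⟨⟨h1, h2, h3⟩, hset⟩ := hp
      rw [Finset.mem_offDiag]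
      refine ⟨?_, ?_, h1.ne⟩ <;> rw [← hset] <;> simp
    have hinj : Set.InjOn (fun p : V × V × V => (p.1, p.2.1))
        ((Finset.univ.filter (fun p : V × V × V =>
          G.Adj p.1 p.2.1 ∧ G.Adj p.2.1 p.2.2 ∧ G.Adj p.2.2 p.1)).filter
            (fun x => ({x.1, x.2.1, x.2.2} : Finset V) = s)) := by
      intro p ha q hb heq
      simp only [Finset.mem_coe, Finset.mem_filter, Finset.mem_univ, true_and] at ha hb
      obtain ⟨⟨h1, h2, h3⟩, hset⟩ := ha
      obtain ⟨⟨h1', h2', h3'⟩, hset'⟩ := hb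
      obtain ⟨a, b, c⟩ := p
      obtain ⟨a', b', c'⟩ := q
      simp only [Prod.mk.injEq] at heq ⊢
      obtain ⟨rfl, rfl⟩ := heq
      refine ⟨rfl, rfl, ?_⟩
      dsimp only at hset hset'
      have h12 : ({a, b, c} : Finset V) = {a, b, c'} := by rw [hset, ← hset']
      have hc : c ∈ ({a, b, c'} : Finset V) := by rw [← h12]; simp
      simp only [Finset.mem_insert, Finset.mem_singleton] at hc
      rcases hc with rfl | rfl | rfl
      · exact absurd rfl h3.ne
      · exact absurd rfl h2.ne
      · rfl
    calc _ ≤ s.offDiag.card := Finset.card_le_card_of_injOn _ key hinj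
      _ = 6 := by rw [Finset.offDiag_card, hs3]

lemma trace_three (G : SimpleGraph V) [DecidableRel G.Adj] :
    Matrix.trace (adjMat G ^ 3) ≤ 6 * ((G.cliqueFinset 3).card : ℝ) := by
  have expand : Matrix.trace (adjMat G ^ 3)
      = ∑ p : V × V × V, (if G.Adj p.1 p.2.1 ∧ G.Adj p.2.1 p.2.2 ∧ G.Adj p.2.2 p.1
          then (1:ℝ) else 0) := by
    rw [pow_succ, pow_two]
    unfold Matrix.trace
    simp only [Matrix.diag, Matrix.mul_apply, Finset.sum_mul]
    rw [Fintype.sum_prod_type (f := fun p : V × V × V =>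
      (if G.Adj p.1 p.2.1 ∧ G.Adj p.2.1 p.2.2 ∧ G.Adj p.2.2 p.1 then (1:ℝ) else 0))]
    refine Finset.sum_congr rfl fun i _ => ?_
    rw [Fintype.sum_prod_type]
    refine Finset.sum_congr rfl fun j _ => Finset.sum_congr rfl fun k _ => ?_
    simp only [adjMat_apply]
    simp only [show G.Adj j i ↔ G.Adj i j from G.adj_comm j i,
      show G.Adj k j ↔ G.Adj j k from G.adj_comm k j,
      show G.Adj i k ↔ G.Adj k i from G.adj_comm i k]
    by_cases h1 : G.Adj i j <;> by_cases h2 : G.Adj j k <;> by_cases h3 : G.Adj k i <;>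
      simp [h1, h2, h3]
  rw [expand, Finset.sum_boole]
  have := tri_count G
  calc ((Finset.univ.filter _).card : ℝ) ≤ ((6 * (G.cliqueFinset 3).card : ℕ) : ℝ) := by
        exact_mod_cast this
    _ = 6 * ((G.cliqueFinset 3).card : ℝ) := by push_cast; ring

lemma aux_pow (U : Matrix V V ℝ) (μ : V → ℝ) (hUU : star U * U = 1) (hUU' : U * star U = 1)
    (k : ℕ) : (U * Matrix.diagonal μ * star U) ^ k
      = U * Matrix.diagonal (fun i => μ i ^ k) * star U := by
  have hcancel : ∀ X : Matrix V V ℝ, star U * (U * X) = X := by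
    intro X; rw [← mul_assoc, hUU, one_mul]
  induction k with
  | zero => simp [pow_zero, Matrix.diagonal_one, hUU']
  | succ k ih =>
    rw [pow_succ, ih]
    simp only [Matrix.mul_assoc]
    rw [hcancel]
    rw [← Matrix.mul_assoc (Matrix.diagonal _) (Matrix.diagonal _), Matrix.diagonal_mul_diagonal]
    simp only [← Matrix.mul_assoc]
    congr 2

lemma trace_pow_eq (A : Matrix V V ℝ) (hA : A.IsHermitian) (k : ℕ) :
    Matrix.trace (A ^ k) = ∑ i, hA.eigenvalues i ^ k := by
  set U : Matrix V V ℝ := (hA.eigenvectorUnitary : Matrix V V ℝ) with hU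
  have hUU : star U * U = 1 := (Matrix.mem_unitaryGroup_iff').mp hA.eigenvectorUnitary.2
  have hUU' : U * star U = 1 := (Matrix.mem_unitaryGroup_iff).mp hA.eigenvectorUnitary.2
  have hsp : A = U * Matrix.diagonal hA.eigenvalues * star U := by
    have := hA.spectral_theorem
    simpa [RCLike.ofReal_real_eq_id] using this
  conv_lhs => rw [hsp]
  rw [aux_pow U _ hUU hUU', Matrix.trace_mul_cycle, hUU, one_mul, Matrix.trace_diagonal]

lemma inner_eq_dot (x y : EuclideanSpace ℝ V) :
    inner (𝕜 := ℝ) x y = dotProduct ⇑x ⇑y := by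
  simp [PiLp.inner_apply, dotProduct, RCLike.inner_apply, mul_comm]

variable (A : Matrix V V ℝ) (hA : A.IsHermitian)
include hA

lemma dot_mulVec_symm (x y : V → ℝ) :
    dotProduct x (A *ᵥ y) = dotProduct (A *ᵥ x) y := by
  have hAT : Aᵀ = A := by
    ext i j
    have heq : Aᴴ = A := hA
    have := congrFun (congrFun heq i) j
    simpa using this
  rw [Matrix.dotProduct_mulVec]
  conv_lhs => rw [← hAT]
  rw [Matrix.vecMul_transpose]

lemma bdot (i j : V) :
    dotProduct ⇑(hA.eigenvectorBasis i) ⇑(hA.eigenvectorBasis j)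
      = if i = j then (1:ℝ) else 0 := by
  rw [← inner_eq_dot]
  exact orthonormal_iff_ite.mp hA.eigenvectorBasis.orthonormal i j

lemma repr_dot (z : V → ℝ) (i : V) :
    hA.eigenvectorBasis.repr ((WithLp.equiv 2 (V → ℝ)).symm z) i
      = dotProduct ⇑(hA.eigenvectorBasis i) z := by
  rw [hA.eigenvectorBasis.repr_apply_apply, inner_eq_dot]
  rfl

lemma repr_mulVec (z : V → ℝ) (i : V) :
    hA.eigenvectorBasis.repr ((WithLp.equiv 2 (V → ℝ)).symm (A *ᵥ z)) i
      = hA.eigenvalues i * hA.eigenvectorBasis.repr ((WithLp.equiv 2 (V → ℝ)).symm z) i := by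
  rw [repr_dot A hA, repr_dot A hA]
  rw [dot_mulVec_symm A hA _ z, hA.mulVec_eigenvectorBasis, smul_dotProduct]
  rfl

lemma dot_eq_sum_repr (z w : V → ℝ) :
    dotProduct z w = ∑ i, hA.eigenvectorBasis.repr ((WithLp.equiv 2 (V → ℝ)).symm z) i *
      hA.eigenvectorBasis.repr ((WithLp.equiv 2 (V → ℝ)).symm w) i := by
  have h := hA.eigenvectorBasis.repr.inner_map_map
    ((WithLp.equiv 2 (V → ℝ)).symm z) ((WithLp.equiv 2 (V → ℝ)).symm w)
  rw [inner_eq_dot, inner_eq_dot] at h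
  rw [show (⇑((WithLp.equiv 2 (V → ℝ)).symm z) : V → ℝ) = z from rfl,
    show (⇑((WithLp.equiv 2 (V → ℝ)).symm w) : V → ℝ) = w from rfl] at h
  rw [← h]
  rfl

end
end Stmt2Aux

theorem stmt2 {V : Type*} [Fintype V] [DecidableEq V] (G : SimpleGraph V)
    [DecidableRel G.Adj] (hE : G.edgeFinset.Nonempty) :
    (G.edgeFinset.card : ℝ) ≥
      specRad G ^ 2 - 3 * ((G.cliqueFinset 3).card : ℝ) / specRad G := by
  classical
  set A := adjMat G with hAdef
  have hA : A.IsHermitian := Stmt2Aux.isHerm G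
  set S : Set ℝ := {t : ℝ | ∃ x : V → ℝ, x ≠ 0 ∧ A.mulVec x = t • x} with hSdef
  have hspec : specRad G = sSup S := rfl
  have hrange_sub : Set.range hA.eigenvalues ⊆ S := by
    rintro t ⟨i, rfl⟩
    refine ⟨⇑(hA.eigenvectorBasis i), ?_, hA.mulVec_eigenvectorBasis i⟩
    intro h0
    have h1 := Stmt2Aux.bdot A hA i i
    rw [h0] at h1
    simp at h1
  have hS_sub : S ⊆ Set.range hA.eigenvalues := by
    rintro t ⟨x, hx0, heig⟩
    have hz : (WithLp.equiv 2 (V → ℝ)).symm x ≠ 0 := by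
      intro h
      apply hx0
      have := congrArg (WithLp.equiv 2 (V → ℝ)) h
      simpa using this
    have hr : hA.eigenvectorBasis.repr ((WithLp.equiv 2 (V → ℝ)).symm x) ≠ 0 :=
      fun h => hz (hA.eigenvectorBasis.repr.map_eq_zero_iff.mp h)
    have hex : ∃ i, hA.eigenvectorBasis.repr ((WithLp.equiv 2 (V → ℝ)).symm x) i ≠ 0 := by
      by_contra hc
      push_neg at hc
      exact hr (by ext i; exact hc i)
    obtain ⟨i, hi⟩ := hex
    refine ⟨i, ?_⟩
    have e1 : hA.eigenvectorBasis.repr ((WithLp.equiv 2 (V → ℝ)).symm (A.mulVec x)) i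
        = hA.eigenvalues i * hA.eigenvectorBasis.repr ((WithLp.equiv 2 (V → ℝ)).symm x) i :=
      Stmt2Aux.repr_mulVec A hA x i
    have e2 : (WithLp.equiv 2 (V → ℝ)).symm (A.mulVec x)
        = t • (WithLp.equiv 2 (V → ℝ)).symm x := by
      rw [heig]; rfl
    rw [e2, map_smul] at e1
    have e3 : (t • hA.eigenvectorBasis.repr ((WithLp.equiv 2 (V → ℝ)).symm x)) i
        = t * hA.eigenvectorBasis.repr ((WithLp.equiv 2 (V → ℝ)).symm x) i := rfl
    rw [e3] at e1
    exact (mul_right_cancel₀ hi e1).symm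
  have hSeq : S = Set.range hA.eigenvalues := Set.Subset.antisymm hS_sub hrange_sub
  have hV : Nonempty V := by
    obtain ⟨e, -⟩ := hE
    induction e using Sym2.ind with
    | _ u v => exact ⟨u⟩
  have hfin : S.Finite := hSeq ▸ Set.finite_range hA.eigenvalues
  have hne : S.Nonempty := hSeq ▸ Set.range_nonempty hA.eigenvalues
  have hρmem : specRad G ∈ S := by rw [hspec]; exact hne.csSup_mem hfin
  have hub : ∀ i, hA.eigenvalues i ≤ specRad G := by
    intro i
    rw [hspec]
    exact le_csSup hfin.bddAbove (hrange_sub ⟨i, rfl⟩)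
  have hρrange : specRad G ∈ Set.range hA.eigenvalues := hSeq ▸ hρmem
  obtain ⟨i₀, hi₀⟩ := hρrange
  have hray : ∀ z : V → ℝ,
      dotProduct z (A.mulVec z) ≤ specRad G * dotProduct z z := by
    intro z
    rw [Stmt2Aux.dot_eq_sum_repr A hA z (A.mulVec z), Stmt2Aux.dot_eq_sum_repr A hA z z,
      Finset.mul_sum]
    refine Finset.sum_le_sum fun i _ => ?_
    rw [Stmt2Aux.repr_mulVec A hA z i]
    have h2 := mul_le_mul_of_nonneg_right (hub i)
      (sq_nonneg (hA.eigenvectorBasis.repr ((WithLp.equiv 2 (V → ℝ)).symm z) i))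
    nlinarith [h2]
  have hApos : ∀ i j, 0 ≤ A i j := by
    intro i j
    rw [hAdef, Stmt2Aux.adjMat_apply]
    split <;> norm_num
  have hlb : ∀ i, -specRad G ≤ hA.eigenvalues i := by
    intro i
    have hii : dotProduct ⇑(hA.eigenvectorBasis i) ⇑(hA.eigenvectorBasis i) = 1 := by
      rw [Stmt2Aux.bdot A hA i i]; simp
    have hmu : hA.eigenvalues i
        = dotProduct ⇑(hA.eigenvectorBasis i) (A.mulVec ⇑(hA.eigenvectorBasis i)) := by
      rw [hA.mulVec_eigenvectorBasis i, dotProduct_smul, hii]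
      simp
    have hyy : dotProduct (fun j => |(⇑(hA.eigenvectorBasis i) : V → ℝ) j|)
        (fun j => |(⇑(hA.eigenvectorBasis i) : V → ℝ) j|) = 1 := by
      rw [← hii]
      simp only [dotProduct]
      refine Finset.sum_congr rfl fun j _ => ?_
      rw [abs_mul_abs_self]
    have hkey : -(dotProduct (fun j => |(⇑(hA.eigenvectorBasis i) : V → ℝ) j|)
          (A.mulVec fun j => |(⇑(hA.eigenvectorBasis i) : V → ℝ) j|))
        ≤ dotProduct ⇑(hA.eigenvectorBasis i) (A.mulVec ⇑(hA.eigenvectorBasis i)) := by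
      simp only [dotProduct, Matrix.mulVec]
      rw [← Finset.sum_neg_distrib]
      refine Finset.sum_le_sum fun j _ => ?_
      rw [Finset.mul_sum, Finset.mul_sum, ← Finset.sum_neg_distrib]
      refine Finset.sum_le_sum fun k _ => ?_
      have h0 := hApos j k
      have h1 : -(|(⇑(hA.eigenvectorBasis i) : V → ℝ) j|
            * |(⇑(hA.eigenvectorBasis i) : V → ℝ) k|)
          ≤ (⇑(hA.eigenvectorBasis i) : V → ℝ) j * (⇑(hA.eigenvectorBasis i) : V → ℝ) k := by
        have h2 := neg_abs_le ((⇑(hA.eigenvectorBasis i) : V → ℝ) j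
          * (⇑(hA.eigenvectorBasis i) : V → ℝ) k)
        rw [abs_mul] at h2
        linarith
      have h3 := mul_le_mul_of_nonneg_left h1 h0
      nlinarith [h3]
    have hray_y := hray (fun j => |(⇑(hA.eigenvectorBasis i) : V → ℝ) j|)
    rw [hyy, mul_one] at hray_y
    rw [hmu]
    linarith [hkey, hray_y]
  have ht1 : ∑ i, hA.eigenvalues i = 0 := by
    have h := Stmt2Aux.trace_pow_eq A hA 1
    rw [pow_one] at h
    have h0 : Matrix.trace A = 0 := by rw [hAdef]; exact Stmt2Aux.trace_one G
    rw [h0] at h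
    simpa using h.symm
  have ht2 : ∑ i, hA.eigenvalues i ^ 2 = 2 * (G.edgeFinset.card : ℝ) := by
    have h := Stmt2Aux.trace_pow_eq A hA 2
    rw [← h, hAdef]
    exact Stmt2Aux.trace_two G
  have ht3 : ∑ i, hA.eigenvalues i ^ 3 ≤ 6 * ((G.cliqueFinset 3).card : ℝ) := by
    have h := Stmt2Aux.trace_pow_eq A hA 3
    rw [← h, hAdef]
    exact Stmt2Aux.trace_three G
  have hc : 0 < (G.edgeFinset.card : ℝ) := by exact_mod_cast hE.card_pos
  have hρpos : 0 < specRad G := by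
    by_contra hcon
    push_neg at hcon
    have hzero : ∀ i, hA.eigenvalues i = 0 := by
      have hnn : ∀ i ∈ Finset.univ, (0:ℝ) ≤ -hA.eigenvalues i := fun i _ => by
        linarith [hub i]
      have hsum : ∑ i, -hA.eigenvalues i = 0 := by
        rw [Finset.sum_neg_distrib, ht1, neg_zero]
      intro i
      have := (Finset.sum_eq_zero_iff_of_nonneg hnn).mp hsum i (Finset.mem_univ i)
      linarith
    have h0 : ∑ i, hA.eigenvalues i ^ 2 = 0 :=
      Finset.sum_eq_zero fun i _ => by rw [hzero i]; ring
    linarith [h0, ht2]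
  have hsplit3 : ∑ i, hA.eigenvalues i ^ 3
      = hA.eigenvalues i₀ ^ 3 + ∑ i ∈ Finset.univ.erase i₀, hA.eigenvalues i ^ 3 :=
    (Finset.add_sum_erase Finset.univ (fun i => hA.eigenvalues i ^ 3) (Finset.mem_univ i₀)).symm
  have hsplit2 : ∑ i, hA.eigenvalues i ^ 2
      = hA.eigenvalues i₀ ^ 2 + ∑ i ∈ Finset.univ.erase i₀, hA.eigenvalues i ^ 2 :=
    (Finset.add_sum_erase Finset.univ (fun i => hA.eigenvalues i ^ 2) (Finset.mem_univ i₀)).symm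
  have herase2 : ∑ i ∈ Finset.univ.erase i₀, hA.eigenvalues i ^ 2
      = 2 * (G.edgeFinset.card : ℝ) - specRad G ^ 2 := by
    rw [hi₀] at hsplit2
    linarith [ht2, hsplit2]
  have hlow : -specRad G * (2 * (G.edgeFinset.card : ℝ) - specRad G ^ 2)
      ≤ ∑ i ∈ Finset.univ.erase i₀, hA.eigenvalues i ^ 3 := by
    rw [← herase2, Finset.mul_sum]
    refine Finset.sum_le_sum fun i _ => ?_
    have h4 := mul_le_mul_of_nonneg_right (hlb i) (sq_nonneg (hA.eigenvalues i))
    nlinarith [h4]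
  have hkey : 2 * specRad G ^ 3 - 2 * (G.edgeFinset.card : ℝ) * specRad G
      ≤ 6 * ((G.cliqueFinset 3).card : ℝ) := by
    rw [hi₀] at hsplit3
    nlinarith [hsplit3, hlow, ht3]
  rw [ge_iff_le, sub_le_iff_le_add]
  have h6 : (specRad G ^ 3 - (G.edgeFinset.card : ℝ) * specRad G) / specRad G
      ≤ 3 * ((G.cliqueFinset 3).card : ℝ) / specRad G := by
    gcongr
    nlinarith [hkey]
  have h7 : (specRad G ^ 3 - (G.edgeFinset.card : ℝ) * specRad G) / specRad G
      = specRad G ^ 2 - (G.edgeFinset.card : ℝ) := by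
    field_simp
  rw [h7] at h6
  linarith [h6]
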